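/- A connected stable ribbon graph Γ is a tree (that is, its loop number ℓ(Γ) = 2g(Γ) + B(Γ) − 1 vanishes) if and only if b₁(Γ) = 0 and every vertex v satisfies g(v) = 0, b(v) = 0 and |C(v)| = 1 (so every vertex consists of a single cycle, necessarily of valency at least 3). Moreover, every tree Γ satisfies g(Γ) = 0, β_Γ# = 1 (equivalently B(Γ) = 1), and has at least three legs: |L(Γ)| ≥ 3. -/
import Mathlib


noncomputable section

/-- The set of orbits ("cycles", counting fixed points, i.e. `1`-cycles)
of a permutation `σ` of `α`: each orbit is recorded as the set of points
in the same cycle of `σ` as some given point. -/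
def permOrbits {α : Type*} (σ : Equiv.Perm α) : Set (Set α) :=
  Set.range fun a => {x | σ.SameCycle a x}

/-- The data of a stable ribbon graph (the stability and connectedness conditions
are stated separately as `RibbonGraph.IsStable` and `RibbonGraph.Connected`):
a finite set `H` of half-edges, a finite set `V` of vertices, an incidence map
`ρ : H → V`, an involution `κ` of `H` (whose fixed points are the legs and whose
`2`-element orbits are the edges), a permutation `c` of `H` preserving each fiber
of `ρ` (whose orbits inside `ρ⁻¹(v)` form the cyclic decomposition `C(v)` of the
vertex `v`), and genus and boundary functions `g, b : V → ℕ`. -/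
structure RibbonGraph where
  /-- the half-edges -/
  H : Type
  /-- the vertices -/
  V : Type
  fintH : Fintype H
  fintV : Fintype V
  /-- the incidence map -/
  ρ : H → V
  /-- the involution determining the legs and the edges -/
  κ : Equiv.Perm H
  κ_invol : ∀ h, κ (κ h) = h
  /-- the permutation determining the cyclic decomposition of each vertex -/
  c : Equiv.Perm H
  c_fiber : ∀ h, ρ (c h) = ρ h
  /-- the genus of each vertex -/
  g : V → ℕ
  /-- the boundary of each vertex -/
  b : V → ℕ

attribute [instance] RibbonGraph.fintH RibbonGraph.fintV

namespace RibbonGraph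

variable (Γ : RibbonGraph)

/-- The set `L(Γ)` of legs: the fixed points of the involution `κ`. -/
def legSet : Set Γ.H := {h | Γ.κ h = h}

/-- `|L(Γ)|`, the number of legs. -/
def numLegs : ℕ := Γ.legSet.ncard

/-- The set `E(Γ)` of edges: the `2`-element orbits of the involution `κ`. -/
def edgeSet : Set (Set Γ.H) := {S | ∃ h, Γ.κ h ≠ h ∧ S = {h, Γ.κ h}}

/-- `|E(Γ)|`, the number of edges. -/
def numEdges : ℕ := Γ.edgeSet.ncard

/-- `|v|`, the valency of a vertex: the number of incident half-edges. -/
def valency (v : Γ.V) : ℕ := {h | Γ.ρ h = v}.ncard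

/-- `|C(v)|`, the number of cycles in the cyclic decomposition of the vertex `v`:
the number of orbits of `c` contained in the fiber `ρ⁻¹(v)`. -/
def numCyclesAt (v : Γ.V) : ℕ := {S ∈ permOrbits Γ.c | ∃ h ∈ S, Γ.ρ h = v}.ncard

/-- `|C(Γ)|`, the total number of orbits of the permutation `c`. -/
def numCycles : ℕ := (permOrbits Γ.c).ncard

/-- `β_Γ#`, the number of orbits (cycles, counting fixed points) of the composite
permutation `c ∘ κ`. -/
def betaSharp : ℕ := (permOrbits (Γ.c * Γ.κ)).ncard

/-- The loop number `l(v) = 2 g(v) + b(v) + |C(v)| − 1` of a vertex. -/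
def vertexLoop (v : Γ.V) : ℚ := 2 * Γ.g v + Γ.b v + Γ.numCyclesAt v - 1

/-- Stability: `|C(v)| + b(v) > 0` and `2 l(v) + |v| ≥ 3` for every vertex. -/
def IsStable : Prop :=
  ∀ v : Γ.V, 0 < Γ.numCyclesAt v + Γ.b v ∧ 3 ≤ 2 * Γ.vertexLoop v + Γ.valency v

/-- The relation on vertices relating `ρ(h)` to `ρ(κ(h))` for each half-edge `h`. -/
def adjRel : Γ.V → Γ.V → Prop := fun v w => ∃ h, Γ.ρ h = v ∧ Γ.ρ (Γ.κ h) = w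

/-- Connectedness: the vertex set is nonempty and the equivalence relation generated
by `adjRel` relates any two vertices. -/
def Connected : Prop :=
  Nonempty Γ.V ∧ ∀ v w : Γ.V, Relation.EqvGen Γ.adjRel v w

/-- The first Betti number `b₁(Γ) = |E(Γ)| − |V(Γ)| + 1` of a connected graph. -/
def betti : ℚ := (Γ.numEdges : ℚ) - Fintype.card Γ.V + 1

/-- The genus `g(Γ) = 1 − |V(Γ)| + (|E(Γ)| + |C(Γ)| − β_Γ#)/2 + Σ_v g(v)` of a
connected stable ribbon graph. -/
def genus : ℚ :=
  1 - (Fintype.card Γ.V : ℚ) + ((Γ.numEdges : ℚ) + Γ.numCycles - Γ.betaSharp) / 2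
    + ∑ v, (Γ.g v : ℚ)

/-- The number of boundary components `B(Γ) = β_Γ# + Σ_v b(v)`. -/
def numBoundary : ℚ := (Γ.betaSharp : ℚ) + ∑ v, (Γ.b v : ℚ)

/-- The loop number `ℓ(Γ) = 2 g(Γ) + B(Γ) − 1`. -/
def loopNumber : ℚ := 2 * Γ.genus + Γ.numBoundary - 1

end RibbonGraph


open Equiv (Perm)
open Equiv.Perm Finset


section AuxLemmas

variable {α β H V : Type*}

/-- transfer SameCycle along a "one-step simulation" -/
lemma sameCycle_of_step [Finite β] (f : Perm α) (g : Perm β) (ι : β → α)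
    (hstep : ∀ x, f.SameCycle (ι x) (ι (g x))) {x y : β} (hxy : g.SameCycle x y) :
    f.SameCycle (ι x) (ι y) := by
  obtain ⟨n, -, -, rfl⟩ := hxy.exists_pow_eq''
  clear hxy
  induction n with
  | zero => simpa using Equiv.Perm.SameCycle.refl f (ι x)
  | succ n ih =>
    rw [pow_succ', Equiv.Perm.mul_apply]
    exact ih.trans (hstep _)

/-- a fiber-preserved function is invariant on cycles -/
lemma rho_sameCycle [Finite H] {ρ : H → V} {c : Perm H} (hc : ∀ x, ρ (c x) = ρ x)
    {x y : H} (h : c.SameCycle x y) : ρ y = ρ x := by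
  obtain ⟨n, -, -, rfl⟩ := h.exists_pow_eq''
  clear h
  induction n with
  | zero => simp
  | succ n ih => rw [pow_succ', Equiv.Perm.mul_apply, hc]; exact ih

/-- 2-to-1 counting on finsets -/
lemma card_eq_two_mul_image [DecidableEq α] [DecidableEq β] (s : Finset α) (f : α → β) (i : α → α)
    (hiP : ∀ a ∈ s, i a ∈ s) (hne : ∀ a ∈ s, i a ≠ a) (hfi : ∀ a ∈ s, f (i a) = f a)
    (hpair : ∀ a ∈ s, ∀ b ∈ s, f a = f b → b = a ∨ b = i a) :
    s.card = 2 * (s.image f).card := by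
  rw [Finset.card_eq_sum_card_fiberwise (fun a ha => Finset.mem_image_of_mem f ha)]
  have h2 : ∀ b ∈ s.image f, (s.filter fun a => f a = b).card = 2 := by
    intro b hb
    obtain ⟨a, ha, rfl⟩ := Finset.mem_image.1 hb
    have hset : s.filter (fun x => f x = f a) = {a, i a} := by
      ext x
      simp only [Finset.mem_filter, Finset.mem_insert, Finset.mem_singleton]
      constructor
      · rintro ⟨hx, hfx⟩
        exact hpair a ha x hx hfx.symm
      · rintro (rfl | rfl)
        · exact ⟨ha, rfl⟩
        · exact ⟨hiP a ha, hfi a ha⟩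
    rw [hset, Finset.card_insert_of_notMem (by simp [(hne a ha).symm]),
      Finset.card_singleton]
  rw [Finset.sum_congr rfl h2, Finset.sum_const, smul_eq_mul, mul_comm]

/-- 2-to-1 counting, set version -/
lemma ncard_eq_two_mul_image [Fintype α] (P : Set α) (f : α → β) (i : α → α)
    (hiP : ∀ a ∈ P, i a ∈ P) (hne : ∀ a ∈ P, i a ≠ a) (hfi : ∀ a ∈ P, f (i a) = f a)
    (hpair : ∀ a ∈ P, ∀ b ∈ P, f a = f b → b = a ∨ b = i a) :
    P.ncard = 2 * (f '' P).ncard := by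
  classical
  have hP : P.Finite := Set.toFinite P
  rw [Set.ncard_eq_toFinset_card P hP]
  have himg : f '' P = ↑(hP.toFinset.image f) := by
    rw [Finset.coe_image, Set.Finite.coe_toFinset]
  rw [himg, Set.ncard_coe_finset]
  exact card_eq_two_mul_image hP.toFinset f i
    (fun a ha => hP.mem_toFinset.2 (hiP a (hP.mem_toFinset.1 ha)))
    (fun a ha => hne a (hP.mem_toFinset.1 ha))
    (fun a ha => hfi a (hP.mem_toFinset.1 ha))
    (fun a ha b hb => hpair a (hP.mem_toFinset.1 ha) b (hP.mem_toFinset.1 hb))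

end AuxLemmas

section TreeAux
variable {H V : Type*} [Fintype H] [Fintype V]

private def stepsAux (adj : V → V → Prop) (root : V) : ℕ → V → Prop
  | 0 => fun w => w = root
  | (k+1) => fun w => ∃ a, stepsAux adj root k a ∧ adj a w

lemma tree_aux [Nonempty V] (ρ : H → V) (κ : Perm H) (hκ : ∀ x, κ (κ x) = x)
    (hconn : ∀ v w : V, Relation.EqvGen (fun a b => ∃ h, ρ h = a ∧ ρ (κ h) = b) v w) :
    Fintype.card V ≤ {z : Sym2 H | ∃ x, κ x ≠ x ∧ z = s(x, κ x)}.ncard + 1 ∧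
    ({x | κ x ≠ x}.ncard = 2 * (Fintype.card V - 1) → 2 ≤ Fintype.card V →
      ∃ (v : V) (h₀ : H), ρ h₀ = v ∧ κ h₀ ≠ h₀ ∧ ρ (κ h₀) ≠ v ∧
        ∀ x, ρ x = v → κ x ≠ x → x = h₀) := by
  classical
  set adj : V → V → Prop := fun a b => ∃ h, ρ h = a ∧ ρ (κ h) = b with hadj
  have hsymm : ∀ a b, adj a b → adj b a := by
    rintro a b ⟨h, h1, h2⟩
    exact ⟨κ h, h2, by rw [hκ]; exact h1⟩
  set root : V := Classical.arbitrary V with hroot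
  set steps := stepsAux adj root with hsteps
  have hreach : ∀ w, ∃ k, steps k w := by
    have key : ∀ a b, Relation.EqvGen adj a b → ((∃ k, steps k a) ↔ ∃ k, steps k b) := by
      intro a b hab
      induction hab with
      | rel a b h =>
        exact ⟨fun ⟨k, hk⟩ => ⟨k + 1, a, hk, h⟩, fun ⟨k, hk⟩ => ⟨k + 1, b, hk, hsymm a b h⟩⟩
      | refl => exact Iff.rfl
      | symm _ _ _ ih => exact ih.symm
      | trans _ _ _ _ _ ih1 ih2 => exact ih1.trans ih2
    exact fun w => (key root w (hconn root w)).1 ⟨0, rfl⟩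
  set n : V → ℕ := fun w => Nat.find (hreach w) with hn
  have hstepn : ∀ w, steps (n w) w := fun w => Nat.find_spec (hreach w)
  have hn0 : n root = 0 := Nat.le_zero.1 (Nat.find_le rfl)
  have hnpos : ∀ w, w ≠ root → n w ≠ 0 := by
    intro w hw h0
    exact hw (by have := hstepn w; rw [h0] at this; exact this)
  have hmono : ∀ a b, adj a b → n b ≤ n a + 1 := fun a b h => Nat.find_le ⟨a, hstepn a, h⟩
  have hparent : ∀ w, w ≠ root → ∃ h, ρ h = w ∧ ρ (κ h) ≠ w ∧ n (ρ (κ h)) + 1 = n w := by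
    intro w hw
    obtain ⟨k, hk⟩ : ∃ k, n w = k + 1 := ⟨n w - 1, by have := hnpos w hw; omega⟩
    have hsw : steps (k + 1) w := by rw [← hk]; exact hstepn w
    obtain ⟨a, hka, h, hρh, hρκh⟩ := hsw
    have hna : n a ≤ k := Nat.find_le hka
    have hnw : n w ≤ n a + 1 := hmono a w ⟨h, hρh, hρκh⟩
    have hnaw : n a + 1 = n w := by omega
    have haw : a ≠ w := by intro h'; rw [h'] at hnaw; omega
    refine ⟨κ h, hρκh, ?_, ?_⟩
    · rw [hκ, hρh]; exact haw
    · rw [hκ, hρh]; exact hnaw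
  choose pa hpa1 hpa2 hpa3 using hparent
  have hpane : ∀ w (hw : w ≠ root), κ (pa w hw) ≠ pa w hw := by
    intro w hw heq
    exact hpa2 w hw (by rw [heq, hpa1])
  set ES : Set (Sym2 H) := {z : Sym2 H | ∃ x, κ x ≠ x ∧ z = s(x, κ x)} with hES
  set P : {w : V // w ≠ root} → ES := fun w =>
    ⟨s(pa w.1 w.2, κ (pa w.1 w.2)), ⟨pa w.1 w.2, hpane w.1 w.2, rfl⟩⟩ with hP
  have hPinj : Function.Injective P := by
    rintro ⟨w, hw⟩ ⟨w', hw'⟩ hPe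
    simp only [hP, Subtype.mk.injEq, Sym2.eq_iff] at hPe
    rcases hPe with ⟨h1, -⟩ | ⟨h1, h2⟩
    · apply Subtype.ext
      have := congrArg ρ h1
      rw [hpa1, hpa1] at this
      exact this
    · exfalso
      have hr1 := congrArg ρ h1
      rw [hpa1] at hr1
      have e1 : n w + 1 = n w' := by rw [hr1]; exact hpa3 w' hw'
      have hr2 := congrArg ρ h2
      rw [hpa1] at hr2
      have e2 : n w' + 1 = n w := by rw [← hr2]; exact hpa3 w hw
      omega
  have hcard1 : Fintype.card V ≤ ES.ncard + 1 := by
    have := Fintype.card_le_of_injective P hPinj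
    have hv : Fintype.card {w : V // w ≠ root} = Fintype.card V - 1 := by
      rw [Fintype.card_subtype_compl, Fintype.card_subtype_eq]
    have hes : Fintype.card ES = ES.ncard := by
      rw [← Nat.card_coe_set_eq, Nat.card_eq_fintype_card]
    rw [hv, hes] at this
    have : 0 < Fintype.card V := Fintype.card_pos
    omega
  refine ⟨hcard1, fun hcount hV2 => ?_⟩
  -- now the leaf part
  have hES2 : ES = (fun x => s(x, κ x)) '' {x | κ x ≠ x} := by
    ext z
    simp only [hES, Set.mem_setOf_eq, Set.mem_image]
    exact ⟨fun ⟨x, h1, h2⟩ => ⟨x, h1, h2.symm⟩, fun ⟨x, h1, h2⟩ => ⟨x, h1, h2.symm⟩⟩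
  have hES3 : {x | κ x ≠ x}.ncard = 2 * ES.ncard := by
    rw [hES2]
    apply ncard_eq_two_mul_image _ _ κ
    · intro a ha; simp only [Set.mem_setOf_eq] at *; rw [hκ]; exact fun h => ha h.symm
    · intro a ha; exact ha
    · intro a ha; rw [hκ]; exact Sym2.eq_swap
    · intro a _ b _ hab
      rw [Sym2.eq_iff] at hab
      rcases hab with ⟨h1, -⟩ | ⟨h1, h2⟩
      · exact Or.inl h1.symm
      · exact Or.inr h2.symm
  have hEScard : ES.ncard = Fintype.card V - 1 := by omega
  have hPbij : Function.Bijective P := by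
    rw [Fintype.bijective_iff_injective_and_card]
    refine ⟨hPinj, ?_⟩
    rw [Fintype.card_subtype_compl, Fintype.card_subtype_eq]
    rw [← Nat.card_coe_set_eq, Nat.card_eq_fintype_card] at hEScard
    omega
  -- choose vertex of maximal distance
  obtain ⟨vmax, -, hvmax⟩ := Finset.exists_max_image Finset.univ n ⟨Classical.arbitrary V, Finset.mem_univ _⟩
  have hvne : vmax ≠ root := by
    obtain ⟨w, hw⟩ := Fintype.exists_ne_of_one_lt_card (by omega) root
    intro h
    have h1 : n w ≠ 0 := hnpos w hw
    have h2 : n w ≤ n vmax := hvmax w (Finset.mem_univ w)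
    rw [h, hn0] at h2
    omega
  refine ⟨vmax, pa vmax hvne, hpa1 vmax hvne, hpane vmax hvne, hpa2 vmax hvne, ?_⟩
  intro x hx hκx
  obtain ⟨⟨w, hw⟩, hPw⟩ := hPbij.2 ⟨s(x, κ x), ⟨x, hκx, rfl⟩⟩
  simp only [hP, Subtype.mk.injEq, Sym2.eq_iff] at hPw
  rcases hPw with ⟨h1, -⟩ | ⟨h1, h2⟩
  · -- pa w hw = x, so w = ρ x = vmax
    have hwv : w = vmax := by
      have := congrArg ρ h1
      rw [hpa1, hx] at this
      exact this
    subst hwv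
    exact h1.symm
  · -- κ (pa w hw) = x : then n vmax + 1 = n w, contradicting maximality
    exfalso
    have e1 : n (ρ x) + 1 = n w := by rw [← h2]; exact hpa3 w hw
    rw [hx] at e1
    have := hvmax w (Finset.mem_univ w)
    omega

end TreeAux

lemma treeLemma : ∀ (N : ℕ) (H V : Type) (_ : Fintype H) (_ : Fintype V)
    (ρ : H → V) (κ c : Perm H),
    (∀ x, κ (κ x) = x) → (∀ x, ρ (c x) = ρ x) →
    (∀ x y, ρ x = ρ y → c.SameCycle x y) →
    (∀ v w : V, Relation.EqvGen (fun a b => ∃ h, ρ h = a ∧ ρ (κ h) = b) v w) →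
    {x | κ x ≠ x}.ncard = 2 * (Fintype.card V - 1) →
    Fintype.card V ≤ N →
    ∀ x y : H, (c * κ).SameCycle x y := by
  intro N
  induction N with
  | zero =>
    intro H V _ _ ρ κ c _ _ _ _ _ hN x y
    have : 0 < Fintype.card V := Fintype.card_pos_iff.2 ⟨ρ x⟩
    omega
  | succ N IH =>
    intro H V fH fV ρ κ c hκ hc hfib hconn hcount hN x y
    by_cases hV1 : Fintype.card V ≤ 1
    · -- single vertex: κ is the identity
      haveI : Subsingleton V := Fintype.card_le_one_iff_subsingleton.mp hV1
      have hc1 : Fintype.card V = 1 :=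
        le_antisymm hV1 (Fintype.card_pos_iff.2 ⟨ρ x⟩)
      have hfix : ∀ z, κ z = z := by
        intro z
        by_contra hz
        have h0 : ({x | κ x ≠ x} : Set H).ncard = 0 := by rw [hcount, hc1]
        rw [Set.ncard_eq_zero (Set.toFinite _)] at h0
        have hzz : z ∈ {x | κ x ≠ x} := hz
        rw [h0] at hzz
        exact hzz
      have hck : c * κ = c := Equiv.ext fun z => by rw [Equiv.Perm.mul_apply, hfix z]
      rw [hck]
      exact hfib x y (Subsingleton.elim (ρ x) (ρ y))
    · push_neg at hV1
      haveI : Nonempty V := ⟨ρ x⟩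
      classical
      obtain ⟨-, hleaf⟩ := tree_aux ρ κ hκ hconn
      obtain ⟨v, h₀, hρ0, hκ0, hρκ0, huniq⟩ := hleaf hcount hV1
      -- auxiliary facts about the leaf
      have hother : ∀ z, ρ (κ z) = v → κ z ≠ z → z = κ h₀ := by
        intro z h1 h2
        have h3 : κ (κ z) ≠ κ z := by rw [hκ]; exact fun e => h2 e.symm
        have := huniq (κ z) h1 h3
        rw [← hκ z, this]
      have hmemκ : ∀ z : H, ρ z ≠ v → z ≠ κ h₀ → ρ (κ z) ≠ v := by
        intro z hz hzne hcon
        by_cases hfx : κ z = z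
        · rw [hfx] at hcon; exact hz hcon
        · exact hzne (hother z hcon hfx)
      -- the pruned graph
      set k : {z : H // ρ z ≠ v} → {z : H // ρ z ≠ v} := fun z =>
        if hz : z.1 = κ h₀ then z else ⟨κ z.1, hmemκ z.1 z.2 hz⟩ with hk
      have hkapp_pos : ∀ (z : {z : H // ρ z ≠ v}) (hz : z.1 = κ h₀), k z = z := fun z hz => dif_pos hz
      have hkapp_neg : ∀ (z : {z : H // ρ z ≠ v}) (hz : ¬ z.1 = κ h₀),
          k z = ⟨κ z.1, hmemκ z.1 z.2 hz⟩ := fun z hz => dif_neg hz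
      have hkinv : Function.Involutive k := by
        intro z
        by_cases hz : z.1 = κ h₀
        · rw [hkapp_pos z hz, hkapp_pos z hz]
        · have hz2 : κ z.1 ≠ κ h₀ := by
            intro he
            have h3 : z.1 = h₀ := by rw [← hκ z.1, he, hκ]
            exact z.2 (by rw [h3]; exact hρ0)
          rw [hkapp_neg z hz, hkapp_neg _ hz2]
          exact Subtype.ext (hκ z.1)
      set κ' : Perm {z : H // ρ z ≠ v} := Function.Involutive.toPerm k hkinv with hκ'def
      have hκ'app : ∀ z, κ' z = k z := fun z => rfl
      set c' : Perm {z : H // ρ z ≠ v} := c.subtypePerm (fun z => by rw [hc]) with hc'def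
      set ρ' : {z : H // ρ z ≠ v} → {w : V // w ≠ v} := fun z => ⟨ρ z.1, z.2⟩ with hρ'def
      have hκ' : ∀ z, κ' (κ' z) = z := fun z => by rw [hκ'app, hκ'app]; exact hkinv z
      have hc' : ∀ z, ρ' (c' z) = ρ' z := fun z => Subtype.ext (hc z.1)
      have hfib' : ∀ a b : {z : H // ρ z ≠ v}, ρ' a = ρ' b → c'.SameCycle a b := by
        intro a b hab
        exact Equiv.Perm.sameCycle_subtypePerm.mpr
          (hfib a.1 b.1 (congrArg Subtype.val hab))
      -- connectivity of the pruned graph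
      have hune : ρ (κ h₀) ≠ v := hρκ0
      set φ : V → {w : V // w ≠ v} := fun w => if hw : w = v then ⟨ρ (κ h₀), hune⟩ else ⟨w, hw⟩ with hφ
      have hstep1 : ∀ a b : V, (∃ h, ρ h = a ∧ ρ (κ h) = b) →
          Relation.EqvGen (fun a b : {w : V // w ≠ v} => ∃ z : {z : H // ρ z ≠ v}, ρ' z = a ∧ ρ' (κ' z) = b) (φ a) (φ b) := by
        rintro a b ⟨h, rfl, rfl⟩
        by_cases ha : ρ h = v
        · by_cases hfx : κ h = h
          · rw [hfx]; exact Relation.EqvGen.refl _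
          · have hh0 : h = h₀ := huniq h ha hfx
            subst hh0
            have e1 : φ (ρ h) = ⟨ρ (κ h), hune⟩ := dif_pos ha
            have e2 : φ (ρ (κ h)) = ⟨ρ (κ h), hune⟩ := dif_neg hρκ0
            rw [e1, e2]
            exact Relation.EqvGen.refl _
        · by_cases hb : ρ (κ h) = v
          · by_cases hfx : κ h = h
            · rw [hfx] at hb; exact absurd hb ha
            · have hh : h = κ h₀ := hother h hb hfx
              subst hh
              have e1 : φ (ρ (κ h₀)) = ⟨ρ (κ h₀), hune⟩ := dif_neg ha
              have e2 : φ (ρ (κ (κ h₀))) = ⟨ρ (κ h₀), hune⟩ := by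
                rw [hκ]; exact dif_pos hρ0
              rw [e1, e2]
              exact Relation.EqvGen.refl _
          · have hne : h ≠ κ h₀ := by
              intro he; rw [he, hκ] at hb; exact hb hρ0
            apply Relation.EqvGen.rel
            refine ⟨⟨h, ha⟩, ?_, ?_⟩
            · rw [show φ (ρ h) = ⟨ρ h, ha⟩ from dif_neg ha]
            · have hκ'h : κ' ⟨h, ha⟩ = ⟨κ h, hmemκ h ha hne⟩ :=
                (hκ'app _).trans (hkapp_neg _ hne)
              rw [hκ'h, show φ (ρ (κ h)) = ⟨ρ (κ h), hb⟩ from dif_neg hb]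
      have hconn' : ∀ a b : {w : V // w ≠ v},
          Relation.EqvGen (fun a b : {w : V // w ≠ v} => ∃ z : {z : H // ρ z ≠ v}, ρ' z = a ∧ ρ' (κ' z) = b) a b := by
        intro a b
        have key : ∀ p q : V, Relation.EqvGen (fun a b => ∃ h, ρ h = a ∧ ρ (κ h) = b) p q →
            Relation.EqvGen (fun a b : {w : V // w ≠ v} => ∃ z : {z : H // ρ z ≠ v}, ρ' z = a ∧ ρ' (κ' z) = b) (φ p) (φ q) := by
          intro p q hpq
          induction hpq with
          | rel p q h => exact hstep1 p q h
          | refl p => exact Relation.EqvGen.refl _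
          | symm p q _ ih => exact Relation.EqvGen.symm _ _ ih
          | trans p q r _ _ ih1 ih2 => exact Relation.EqvGen.trans _ _ _ ih1 ih2
        have h1 := key a.1 b.1 (hconn a.1 b.1)
        rwa [show φ a.1 = a from by rw [hφ]; exact (dif_neg a.2).trans (by rfl),
          show φ b.1 = b from by rw [hφ]; exact (dif_neg b.2).trans (by rfl)] at h1
      -- the count for the pruned graph
      have hV'card : Fintype.card {w : V // w ≠ v} = Fintype.card V - 1 := by
        have e : {w : V // w ≠ v} ≃ {w : V // ¬ w = v} := Equiv.refl _
        rw [Fintype.card_congr e, Fintype.card_subtype_compl, Fintype.card_subtype_eq]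
      have hS : ({z : {z : H // ρ z ≠ v} | κ' z ≠ z}).ncard
          = ({y : H | κ y ≠ y ∧ ρ y ≠ v ∧ y ≠ κ h₀}).ncard := by
        rw [← Nat.card_coe_set_eq, ← Nat.card_coe_set_eq]
        apply Nat.card_congr
        have hneKey : ∀ z : ↥{z : {z : H // ρ z ≠ v} | κ' z ≠ z}, z.1.1 ≠ κ h₀ :=
          fun z he2 => z.2 ((hκ'app z.1).trans (hkapp_pos z.1 he2))
        have hfixKey : ∀ z : ↥{z : {z : H // ρ z ≠ v} | κ' z ≠ z}, κ z.1.1 ≠ z.1.1 :=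
          fun z he => z.2 ((hκ'app z.1).trans
            ((hkapp_neg z.1 (hneKey z)).trans (Subtype.ext he)))
        exact ⟨fun z => ⟨z.1.1, hfixKey z, z.1.2, hneKey z⟩,
          fun y => ⟨⟨y.1, y.2.2.1⟩, fun he => y.2.1 (congrArg Subtype.val
            ((hkapp_neg ⟨y.1, y.2.2.1⟩ y.2.2.2).symm.trans ((hκ'app _).symm.trans he)))⟩,
          fun z => Subtype.ext (Subtype.ext rfl), fun y => Subtype.ext rfl⟩
      have hsplit : {y : H | κ y ≠ y}
          = {y : H | κ y ≠ y ∧ ρ y ≠ v ∧ y ≠ κ h₀} ∪ {h₀, κ h₀} := by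
        ext y
        simp only [Set.mem_setOf_eq, Set.mem_union, Set.mem_insert_iff,
          Set.mem_singleton_iff]
        constructor
        · intro hy
          by_cases h1 : y = κ h₀
          · right; right; exact h1
          by_cases h2 : ρ y = v
          · right; left; exact huniq y h2 hy
          · left; exact ⟨hy, h2, h1⟩
        · rintro (⟨hy, -⟩ | rfl | rfl)
          · exact hy
          · exact hκ0
          · rw [hκ]; exact fun e => hκ0 e.symm
      have hdisj : Disjoint {y : H | κ y ≠ y ∧ ρ y ≠ v ∧ y ≠ κ h₀} ({h₀, κ h₀} : Set H) := by
        rw [Set.disjoint_left]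
        rintro a ⟨-, ha2, ha3⟩ hmem
        rcases hmem with rfl | rfl
        · exact ha2 hρ0
        · exact ha3 rfl
      have hcount2 : ({y : H | κ y ≠ y} : Set H).ncard
          = ({y : H | κ y ≠ y ∧ ρ y ≠ v ∧ y ≠ κ h₀}).ncard + 2 := by
        rw [hsplit, Set.ncard_union_eq hdisj (Set.toFinite _) (Set.toFinite _),
          Set.ncard_pair (fun e => hκ0 e.symm)]
      have hcount' : ({z : {z : H // ρ z ≠ v} | κ' z ≠ z}).ncard = 2 * (Fintype.card {w : V // w ≠ v} - 1) := by
        rw [hS, hV'card]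
        rw [hcount] at hcount2
        omega
      have hcard' : Fintype.card {w : V // w ≠ v} ≤ N := by omega
      have IH' := IH {z : H // ρ z ≠ v} {w : V // w ≠ v} inferInstance inferInstance ρ' κ' c' hκ' hc' hfib' hconn'
        hcount' hcard'
      -- boundary walk facts
      set σ : Perm H := c * κ with hσ
      have hσapp : ∀ z, σ z = c (κ z) := fun z => rfl
      have hbase : σ.SameCycle (κ h₀) (c h₀) := by
        refine ⟨1, ?_⟩
        simp only [zpow_one, hσapp, hκ]
      have hbase2 : σ.SameCycle h₀ (c (κ h₀)) := ⟨1, by simp only [zpow_one, hσapp]⟩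
      have keyB1 : ∀ m : ℕ, σ.SameCycle (κ h₀) ((c ^ (m + 1)) h₀) := by
        intro m
        induction m with
        | zero => simpa using hbase
        | succ m ih =>
          by_cases hy : (c ^ (m + 1)) h₀ = h₀
          · have e : (c ^ (m + 1 + 1)) h₀ = c h₀ := by
              rw [pow_succ' c (m + 1), Equiv.Perm.mul_apply, hy]
            rw [e]; exact hbase
          · have hyv : ρ ((c ^ (m + 1)) h₀) = v := by
              have hsc : c.SameCycle h₀ ((c ^ (m + 1)) h₀) :=
                ⟨((m + 1 : ℕ) : ℤ), by rw [zpow_natCast]⟩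
              rw [rho_sameCycle hc hsc, hρ0]
            have hfx : κ ((c ^ (m + 1)) h₀) = (c ^ (m + 1)) h₀ := by
              by_contra hf
              exact hy (huniq _ hyv hf)
            have hstep : σ.SameCycle ((c ^ (m + 1)) h₀) ((c ^ (m + 1 + 1)) h₀) := by
              refine ⟨1, ?_⟩
              rw [zpow_one, hσapp, hfx, pow_succ' c (m + 1), Equiv.Perm.mul_apply]
            exact ih.trans hstep
      have keyB2 : σ.SameCycle (κ h₀) h₀ := by
        obtain ⟨m, hm⟩ : ∃ m : ℕ, orderOf c = m + 1 :=
          ⟨orderOf c - 1, by have := orderOf_pos c; omega⟩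
        have h1 := keyB1 m
        rw [← hm, pow_orderOf_eq_one] at h1
        simpa using h1
      have keyB3 : ∀ z, ρ z = v → σ.SameCycle (κ h₀) z := by
        intro z hz
        obtain ⟨i, hipos, -, hiz⟩ := (hfib h₀ z (by rw [hρ0, hz])).exists_pow_eq''
        obtain ⟨m, rfl⟩ : ∃ m, i = m + 1 := ⟨i - 1, by omega⟩
        rw [← hiz]
        exact keyB1 m
      -- one-step simulation
      have stepSim : ∀ z : {z : H // ρ z ≠ v}, σ.SameCycle z.1 ((c' * κ') z).1 := by
        intro z
        by_cases hz : z.1 = κ h₀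
        · have e1 : κ' z = z := (hκ'app z).trans (hkapp_pos z hz)
          have e2 : (c' * κ') z = c' z := by rw [Equiv.Perm.mul_apply, e1]
          rw [e2]
          have e3 : (c' z).1 = c z.1 := rfl
          rw [e3, hz]
          exact keyB2.trans hbase2
        · have e1 : κ' z = ⟨κ z.1, hmemκ z.1 z.2 hz⟩ := (hκ'app z).trans (hkapp_neg z hz)
          have e2 : ((c' * κ') z).1 = c (κ z.1) := by
            rw [Equiv.Perm.mul_apply, e1]; rfl
          rw [e2]
          exact ⟨1, by rw [zpow_one, hσapp]⟩
      have main : ∀ a b : {z : H // ρ z ≠ v}, σ.SameCycle a.1 b.1 :=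
        fun a b => sameCycle_of_step σ (c' * κ') Subtype.val stepSim (IH' a b)
      have red : ∀ z : H, ∃ z' : {z : H // ρ z ≠ v}, σ.SameCycle z z'.1 := by
        intro z
        by_cases hz : ρ z = v
        · exact ⟨⟨κ h₀, hρκ0⟩, (keyB3 z hz).symm⟩
        · exact ⟨⟨z, hz⟩, Equiv.Perm.SameCycle.refl _ _⟩
      obtain ⟨x', hx'⟩ := red x
      obtain ⟨y', hy'⟩ := red y
      exact hx'.trans ((main x' y').trans hy'.symm)
namespace RibbonGraph

lemma two_mul_numEdges (Γ : RibbonGraph) :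
    {x | Γ.κ x ≠ x}.ncard = 2 * Γ.numEdges := by
  classical
  have himg : Γ.edgeSet = (fun x => ({x, Γ.κ x} : Set Γ.H)) '' {x | Γ.κ x ≠ x} := by
    ext S
    simp only [edgeSet, Set.mem_setOf_eq, Set.mem_image]
    exact ⟨fun ⟨h, h1, h2⟩ => ⟨h, h1, h2.symm⟩, fun ⟨h, h1, h2⟩ => ⟨h, h1, h2.symm⟩⟩
  rw [numEdges, himg]
  apply ncard_eq_two_mul_image _ _ Γ.κ
  · intro a ha
    simp only [Set.mem_setOf_eq] at *
    rw [Γ.κ_invol]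
    exact fun h => ha h.symm
  · exact fun a ha => ha
  · intro a _
    rw [Γ.κ_invol]
    exact Set.pair_comm _ _
  · intro a _ b _ hab
    have : b ∈ ({a, Γ.κ a} : Set Γ.H) := by rw [hab]; exact Set.mem_insert _ _
    simpa using this

lemma numLegs_add (Γ : RibbonGraph) :
    Γ.numLegs + {x | Γ.κ x ≠ x}.ncard = Fintype.card Γ.H := by
  have h1 : Γ.legSet = {x | Γ.κ x ≠ x}ᶜ := by
    ext h; simp [legSet]
  rw [numLegs, h1, add_comm, Set.ncard_add_ncard_compl, Nat.card_eq_fintype_card]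

lemma sum_valency (Γ : RibbonGraph) : ∑ v, Γ.valency v = Fintype.card Γ.H := by
  classical
  have h1 : ∀ v, Γ.valency v = (Finset.univ.filter fun h => Γ.ρ h = v).card := by
    intro v
    rw [valency, ← Set.ncard_coe_finset]
    congr 1
    ext h
    simp
  simp_rw [h1]
  rw [show Fintype.card Γ.H = Finset.univ.card from (Finset.card_univ).symm]
  exact (Finset.card_eq_sum_card_fiberwise (fun x _ => Finset.mem_univ (Γ.ρ x))).symm

lemma numCycles_eq (Γ : RibbonGraph) (hne : Nonempty Γ.V) :
    Γ.numCycles = ∑ v, Γ.numCyclesAt v := by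
  classical
  have hfin : (permOrbits Γ.c).Finite := Set.toFinite _
  set F : Set Γ.H → Γ.V := fun S =>
    if h : S.Nonempty then Γ.ρ h.some else Classical.arbitrary Γ.V with hF
  have horb : ∀ S ∈ permOrbits Γ.c, ∀ h ∈ S, F S = Γ.ρ h := by
    rintro S ⟨a, rfl⟩ h hh
    have hSne : ({x | Γ.c.SameCycle a x}).Nonempty := ⟨a, Equiv.Perm.SameCycle.refl _ _⟩
    rw [hF]
    simp only [dif_pos hSne]
    have h1 : Γ.ρ hSne.some = Γ.ρ a := rho_sameCycle Γ.c_fiber hSne.some_mem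
    have h2 : Γ.ρ h = Γ.ρ a := rho_sameCycle Γ.c_fiber hh
    rw [h1, h2]
  rw [numCycles, Set.ncard_eq_toFinset_card _ hfin,
    Finset.card_eq_sum_card_fiberwise (f := F) (t := Finset.univ)
      (fun S _ => Finset.mem_univ (F S))]
  apply Finset.sum_congr rfl
  intro v _
  rw [numCyclesAt, ← Set.ncard_coe_finset]
  congr 1
  ext S
  simp only [Finset.coe_filter, Set.Finite.mem_toFinset, Set.mem_setOf_eq]
  constructor
  · rintro ⟨hSP, hFv⟩
    obtain ⟨a, ha⟩ := hSP
    have hmem : a ∈ S := by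
      rw [← ha]
      exact Equiv.Perm.SameCycle.refl _ _
    refine ⟨⟨a, ha⟩, a, hmem, ?_⟩
    rw [← horb S ⟨a, ha⟩ a hmem]
    exact hFv
  · rintro ⟨hSP, h, hh, hv⟩
    exact ⟨hSP, by rw [horb S hSP h hh]; exact hv⟩

lemma card_V_le (Γ : RibbonGraph) (hne : Nonempty Γ.V)
    (hcon : ∀ v w : Γ.V, Relation.EqvGen Γ.adjRel v w) :
    Fintype.card Γ.V ≤ Γ.numEdges + 1 := by
  haveI := hne
  obtain ⟨h1, -⟩ := tree_aux Γ.ρ Γ.κ Γ.κ_invol hcon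
  have hES2 : {z : Sym2 Γ.H | ∃ x, Γ.κ x ≠ x ∧ z = s(x, Γ.κ x)}
      = (fun x => s(x, Γ.κ x)) '' {x | Γ.κ x ≠ x} := by
    ext z
    simp only [Set.mem_setOf_eq, Set.mem_image]
    exact ⟨fun ⟨x, hx1, hx2⟩ => ⟨x, hx1, hx2.symm⟩, fun ⟨x, hx1, hx2⟩ => ⟨x, hx1, hx2.symm⟩⟩
  have hES3 : {x | Γ.κ x ≠ x}.ncard
      = 2 * ({z : Sym2 Γ.H | ∃ x, Γ.κ x ≠ x ∧ z = s(x, Γ.κ x)}).ncard := by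
    rw [hES2]
    apply ncard_eq_two_mul_image _ _ Γ.κ
    · intro a ha
      simp only [Set.mem_setOf_eq] at *
      rw [Γ.κ_invol]
      exact fun h => ha h.symm
    · exact fun a ha => ha
    · intro a _
      rw [Γ.κ_invol]
      exact Sym2.eq_swap
    · intro a _ b _ hab
      rw [Sym2.eq_iff] at hab
      rcases hab with ⟨hx, -⟩ | ⟨-, hx⟩
      · exact Or.inl hx.symm
      · exact Or.inr hx.symm
  have h2 := Γ.two_mul_numEdges
  omega

end RibbonGraph

/-- **Characterization of trees among connected stable ribbon graphs.**
A connected stable ribbon graph `Γ` is a tree (that is, its loop number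
`ℓ(Γ) = 2 g(Γ) + B(Γ) − 1` vanishes) if and only if `b₁(Γ) = 0` and every vertex `v`
satisfies `g(v) = 0`, `b(v) = 0` and `|C(v)| = 1` (so every vertex consists of a
single cycle).  Moreover, every tree `Γ` satisfies `g(Γ) = 0`, `β_Γ# = 1`
(equivalently `B(Γ) = 1`), and has at least three legs: `|L(Γ)| ≥ 3`. -/
theorem RibbonGraph.tree_characterization
    (Γ : RibbonGraph) (hstable : Γ.IsStable) (hconn : Γ.Connected) :
    (Γ.loopNumber = 0 ↔
      Γ.betti = 0 ∧ ∀ v : Γ.V, Γ.g v = 0 ∧ Γ.b v = 0 ∧ Γ.numCyclesAt v = 1) ∧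
    (Γ.loopNumber = 0 →
      Γ.genus = 0 ∧ Γ.betaSharp = 1 ∧ Γ.numBoundary = 1 ∧ 3 ≤ Γ.numLegs) := by
  classical
  obtain ⟨hneV, hcon⟩ := hconn
  have hL1 : Γ.numCycles = ∑ v, Γ.numCyclesAt v := Γ.numCycles_eq hneV
  have hL1q : (Γ.numCycles : ℚ) = ∑ v, (Γ.numCyclesAt v : ℚ) := by
    rw [hL1]; push_cast; rfl
  have hL2 : Γ.loopNumber
      = Γ.betti + ∑ v, ((2 * Γ.g v + Γ.b v + Γ.numCyclesAt v : ℚ) - 1) := by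
    have hsum : ∑ v, ((2 * (Γ.g v : ℚ) + Γ.b v + Γ.numCyclesAt v) - 1)
        = 2 * ∑ v, (Γ.g v : ℚ) + ∑ v, (Γ.b v : ℚ) + ∑ v, (Γ.numCyclesAt v : ℚ)
          - Fintype.card Γ.V := by
      rw [Finset.sum_sub_distrib, Finset.sum_add_distrib, Finset.sum_add_distrib,
        ← Finset.mul_sum, Finset.sum_const, Finset.card_univ, nsmul_eq_mul, mul_one]
    rw [RibbonGraph.loopNumber, RibbonGraph.genus, RibbonGraph.numBoundary,
      RibbonGraph.betti, hsum, hL1q]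
    ring
  have hbetti : (0 : ℚ) ≤ Γ.betti := by
    have h1 := Γ.card_V_le hneV hcon
    have h2 : (Fintype.card Γ.V : ℚ) ≤ (Γ.numEdges : ℚ) + 1 := by exact_mod_cast h1
    rw [RibbonGraph.betti]; linarith
  have hterm : ∀ v ∈ Finset.univ,
      (0:ℚ) ≤ (2 * Γ.g v + Γ.b v + Γ.numCyclesAt v : ℚ) - 1 := by
    intro v _
    have h1 := (hstable v).1
    have h2 : (1:ℚ) ≤ (Γ.numCyclesAt v : ℚ) + Γ.b v := by exact_mod_cast h1
    have h3 : (0:ℚ) ≤ (Γ.g v : ℚ) := Nat.cast_nonneg _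
    linarith
  have hvc : ∀ v, ((2 * Γ.g v + Γ.b v + Γ.numCyclesAt v : ℚ) - 1 = 0)
      → Γ.g v = 0 ∧ Γ.b v = 0 ∧ Γ.numCyclesAt v = 1 := by
    intro v h
    have hq : (2 * Γ.g v + Γ.b v + Γ.numCyclesAt v : ℚ) = 1 := by linarith
    have hn : 2 * Γ.g v + Γ.b v + Γ.numCyclesAt v = 1 := by exact_mod_cast hq
    have hC : Γ.numCyclesAt v ≠ 0 := by
      intro hC0
      have hval : 3 ≤ Γ.valency v := by
        have h2 := (hstable v).2
        rw [RibbonGraph.vertexLoop] at h2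
        have h4 : (3:ℚ) ≤ (Γ.valency v : ℚ) := by linarith [hq]
        exact_mod_cast h4
      have hfe : ({h | Γ.ρ h = v}).Nonempty := by
        apply Set.nonempty_of_ncard_ne_zero
        have hv : Γ.valency v = {h | Γ.ρ h = v}.ncard := rfl
        omega
      obtain ⟨h0, hh0⟩ := hfe
      have hmem : {x | Γ.c.SameCycle h0 x} ∈
          {S ∈ permOrbits Γ.c | ∃ h' ∈ S, Γ.ρ h' = v} :=
        ⟨⟨h0, rfl⟩, h0, Equiv.Perm.SameCycle.refl _ _, hh0⟩
      have hpos := (Set.ncard_pos (Set.toFinite _)).2 ⟨_, hmem⟩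
      rw [RibbonGraph.numCyclesAt] at hC0
      omega
    omega
  have hiff : Γ.loopNumber = 0 ↔
      Γ.betti = 0 ∧ ∀ v : Γ.V, Γ.g v = 0 ∧ Γ.b v = 0 ∧ Γ.numCyclesAt v = 1 := by
    constructor
    · intro hl
      rw [hL2] at hl
      have hsums := Finset.sum_nonneg hterm
      have hb0 : Γ.betti = 0 := by linarith
      have hs0 : ∑ v, ((2 * Γ.g v + Γ.b v + Γ.numCyclesAt v : ℚ) - 1) = 0 := by linarith
      refine ⟨hb0, fun v => hvc v ?_⟩
      exact (Finset.sum_eq_zero_iff_of_nonneg hterm).1 hs0 v (Finset.mem_univ v)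
    · rintro ⟨hb, hcond⟩
      have hz : ∑ v, ((2 * Γ.g v + Γ.b v + Γ.numCyclesAt v : ℚ) - 1) = 0 :=
        Finset.sum_eq_zero fun v _ => by
          obtain ⟨h1, h2, h3⟩ := hcond v
          rw [h1, h2, h3]; norm_num
      rw [hL2, hb, hz, add_zero]
  refine ⟨hiff, fun hl => ?_⟩
  obtain ⟨hb, hcond⟩ := hiff.1 hl
  have hE1 : Γ.numEdges + 1 = Fintype.card Γ.V := by
    rw [RibbonGraph.betti] at hb
    have h5 : ((Γ.numEdges + 1 : ℕ) : ℚ) = (Fintype.card Γ.V : ℚ) := by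
      push_cast; linarith
    exact_mod_cast h5
  have hval3 : ∀ v, 3 ≤ Γ.valency v := by
    intro v
    obtain ⟨h1, h2, h3⟩ := hcond v
    have hs := (hstable v).2
    rw [RibbonGraph.vertexLoop, h1, h2, h3] at hs
    have h4 : (3:ℚ) ≤ (Γ.valency v : ℚ) := by push_cast at hs; linarith
    exact_mod_cast h4
  have hfibS : ∀ x y : Γ.H, Γ.ρ x = Γ.ρ y → Γ.c.SameCycle x y := by
    intro x y hxy
    obtain ⟨-, -, hC⟩ := hcond (Γ.ρ y)
    rw [RibbonGraph.numCyclesAt, Set.ncard_eq_one] at hC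
    obtain ⟨S, hS⟩ := hC
    have hxm : {z | Γ.c.SameCycle x z} = S := by
      have hmem : {z | Γ.c.SameCycle x z} ∈
          {S' ∈ permOrbits Γ.c | ∃ h ∈ S', Γ.ρ h = Γ.ρ y} :=
        ⟨⟨x, rfl⟩, x, Equiv.Perm.SameCycle.refl _ _, hxy⟩
      rw [hS] at hmem
      exact hmem
    have hym : {z | Γ.c.SameCycle y z} = S := by
      have hmem : {z | Γ.c.SameCycle y z} ∈
          {S' ∈ permOrbits Γ.c | ∃ h ∈ S', Γ.ρ h = Γ.ρ y} :=
        ⟨⟨y, rfl⟩, y, Equiv.Perm.SameCycle.refl _ _, rfl⟩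
      rw [hS] at hmem
      exact hmem
    have hy : y ∈ {z | Γ.c.SameCycle x z} := by
      rw [hxm, ← hym]
      exact Equiv.Perm.SameCycle.refl _ _
    exact hy
  have hHne : Nonempty Γ.H := by
    obtain ⟨v⟩ := hneV
    have h3 := hval3 v
    have hfe : ({h | Γ.ρ h = v}).Nonempty := by
      apply Set.nonempty_of_ncard_ne_zero
      have hv : Γ.valency v = {h | Γ.ρ h = v}.ncard := rfl
      omega
    exact ⟨hfe.some⟩
  have hcount : {x | Γ.κ x ≠ x}.ncard = 2 * (Fintype.card Γ.V - 1) := by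
    rw [Γ.two_mul_numEdges]
    omega
  have hβ : ∀ x y : Γ.H, (Γ.c * Γ.κ).SameCycle x y :=
    treeLemma (Fintype.card Γ.V) Γ.H Γ.V Γ.fintH Γ.fintV Γ.ρ Γ.κ Γ.c Γ.κ_invol
      Γ.c_fiber hfibS hcon hcount le_rfl
  have hβ1 : Γ.betaSharp = 1 := by
    rw [RibbonGraph.betaSharp]
    have horb : permOrbits (Γ.c * Γ.κ) = {Set.univ} := by
      ext S
      simp only [permOrbits, Set.mem_range, Set.mem_singleton_iff]
      constructor
      · rintro ⟨a, rfl⟩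
        ext z
        simp [hβ a z]
      · rintro rfl
        obtain ⟨a⟩ := hHne
        exact ⟨a, by ext z; simp [hβ a z]⟩
    rw [horb, Set.ncard_singleton]
  have hCsum : Γ.numCycles = Fintype.card Γ.V := by
    rw [hL1, Finset.sum_congr rfl (fun v _ => (hcond v).2.2), Finset.sum_const,
      Finset.card_univ, smul_eq_mul, mul_one]
  have hgsum : ∑ v, (Γ.g v : ℚ) = 0 :=
    Finset.sum_eq_zero fun v _ => by rw [(hcond v).1]; norm_num
  have hbsum : ∑ v, (Γ.b v : ℚ) = 0 :=
    Finset.sum_eq_zero fun v _ => by rw [(hcond v).2.1]; norm_num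
  have hEq : (Γ.numEdges : ℚ) = (Fintype.card Γ.V : ℚ) - 1 := by
    have h6 := congrArg (Nat.cast : ℕ → ℚ) hE1
    push_cast at h6
    linarith
  refine ⟨?_, hβ1, ?_, ?_⟩
  · rw [RibbonGraph.genus, hgsum, hβ1, hEq,
      show (Γ.numCycles : ℚ) = (Fintype.card Γ.V : ℚ) from by exact_mod_cast hCsum]
    push_cast
    ring
  · rw [RibbonGraph.numBoundary, hβ1, hbsum]
    norm_num
  · have k1 := Γ.numLegs_add
    have k2 := Γ.two_mul_numEdges
    have k3 := Γ.sum_valency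
    have k4 : 3 * Fintype.card Γ.V ≤ ∑ v, Γ.valency v := by
      calc 3 * Fintype.card Γ.V = ∑ _v : Γ.V, 3 := by
            rw [Finset.sum_const, Finset.card_univ, smul_eq_mul, mul_comm]
        _ ≤ ∑ v, Γ.valency v := Finset.sum_le_sum (fun v _ => hval3 v)
    have k5 : 0 < Fintype.card Γ.V := Fintype.card_pos
    omega
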